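/- arXiv:2603.16380 — 3 statements merged into one kernel-verified Lean document; each statement's English description precedes it below -/
import Mathlib

section
/- For every m ∈ ℕ, κ ≥ 0 and x₁, x₂ ∈ ℝ, the integral ∫_ℝ |y|^m exp(κ(x₁ - y) - e^{x₁-y} - e^{y-x₂}) dy is finite and bounded by P(|x₁|,|x₂|) · exp(([κ(x₁-x₂)/2 - e^{(x₁-x₂)/2}]) · θ(x₁-x₂)), where P is a polynomial in |x₁|, |x₂| (depending on m, κ) and θ is the Heaviside step function (θ(t)=1 for t ≥ 0, θ(t)=0 for t < 0). -/
open MeasureTheory Real Set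
open MeasureTheory Real Set

noncomputable def theta (t : ℝ) : ℝ := if 0 ≤ t then 1 else 0
-- elementary: L*u - exp u ≤ L*log L - L for L ≥ 1
lemma aux_KL {L : ℝ} (hL : 1 ≤ L) (u : ℝ) :
    L * u - Real.exp u ≤ L * Real.log L - L := by
  have hL0 : 0 < L := by linarith
  have h := Real.add_one_le_exp (u - Real.log L)
  rw [Real.exp_sub, Real.exp_log hL0] at h
  have h2 : L * (u - Real.log L + 1) ≤ Real.exp u := by
    rw [mul_comm, ← le_div_iff₀ hL0]; linarith
  nlinarith

lemma aux_coeff_mul {p q : MvPolynomial (Fin 2) ℝ} (hp : ∀ d, 0 ≤ p.coeff d)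
    (hq : ∀ d, 0 ≤ q.coeff d) : ∀ d, 0 ≤ (p * q).coeff d := by
  intro d
  rw [MvPolynomial.coeff_mul]
  exact Finset.sum_nonneg fun x _ => mul_nonneg (hp _) (hq _)

lemma aux_coeff_P (K : ℝ) (hK : 0 ≤ K) (n : ℕ) :
    ∀ d, 0 ≤ (MvPolynomial.C K * (1 + MvPolynomial.X 0 + MvPolynomial.X 1) ^ n
      : MvPolynomial (Fin 2) ℝ).coeff d := by
  have hbase : ∀ d, (0:ℝ) ≤ (1 + MvPolynomial.X 0 + MvPolynomial.X 1
      : MvPolynomial (Fin 2) ℝ).coeff d := by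
    intro d
    simp only [MvPolynomial.coeff_add, MvPolynomial.coeff_one, MvPolynomial.coeff_X']
    positivity
  have hpow : ∀ k : ℕ, ∀ d, (0:ℝ) ≤ ((1 + MvPolynomial.X 0 + MvPolynomial.X 1
      : MvPolynomial (Fin 2) ℝ) ^ k).coeff d := by
    intro k
    induction k with
    | zero => intro d; simp [MvPolynomial.coeff_one]; positivity
    | succ k ih => rw [pow_succ]; exact aux_coeff_mul ih hbase
  refine aux_coeff_mul (fun d => ?_) (hpow n)
  simp only [MvPolynomial.coeff_C]
  positivity
lemma aux_point {κ : ℝ} (hκ : 0 ≤ κ) (x₁ x₂ y : ℝ) :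
    κ * (x₁ - y) - Real.exp (x₁ - y) - Real.exp (y - x₂)
      + 2 * (max (min ((x₁+x₂)/2) x₁ - y) 0 + max (y - max ((x₁+x₂)/2) x₂) 0)
    ≤ ((κ+2) * Real.log (κ+2) + 1)
      + (κ * (x₁ - x₂) / 2 - Real.exp ((x₁ - x₂)/2)) * theta (x₁ - x₂) := by
  have hL : (1:ℝ) ≤ κ + 2 := by linarith
  rcases le_or_gt x₂ x₁ with hle | hlt
  · have ht : theta (x₁ - x₂) = 1 := if_pos (by linarith)
    have hac : min ((x₁+x₂)/2) x₁ = (x₁+x₂)/2 := min_eq_left (by linarith)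
    have hbc : max ((x₁+x₂)/2) x₂ = (x₁+x₂)/2 := max_eq_left (by linarith)
    rw [ht, hac, hbc, mul_one]
    rcases le_total y ((x₁+x₂)/2) with hy | hy
    · rw [max_eq_left (by linarith), max_eq_right (by linarith)]
      have e1 : Real.exp (x₁ - y)
          = Real.exp ((x₁-x₂)/2) * Real.exp ((x₁+x₂)/2 - y) := by
        rw [← Real.exp_add]; congr 1; ring
      have e2 : 1 ≤ Real.exp ((x₁-x₂)/2) := Real.one_le_exp (by linarith)
      have e6 : 1 ≤ Real.exp ((x₁+x₂)/2 - y) := Real.one_le_exp (by linarith)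
      have e4 := aux_KL hL ((x₁+x₂)/2 - y)
      nlinarith [mul_nonneg (by linarith : (0:ℝ) ≤ Real.exp ((x₁-x₂)/2) - 1)
          (by linarith : (0:ℝ) ≤ Real.exp ((x₁+x₂)/2 - y) - 1),
        (Real.exp_pos (y - x₂)).le]
    · rw [max_eq_right (by linarith), max_eq_left (by linarith)]
      have e1 : Real.exp (y - x₂)
          = Real.exp ((x₁-x₂)/2) * Real.exp (y - (x₁+x₂)/2) := by
        rw [← Real.exp_add]; congr 1; ring
      have e2 : 1 ≤ Real.exp ((x₁-x₂)/2) := Real.one_le_exp (by linarith)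
      have e6 : 1 ≤ Real.exp (y - (x₁+x₂)/2) := Real.one_le_exp (by linarith)
      have e4 := aux_KL hL (y - (x₁+x₂)/2)
      nlinarith [mul_nonneg (by linarith : (0:ℝ) ≤ Real.exp ((x₁-x₂)/2) - 1)
          (by linarith : (0:ℝ) ≤ Real.exp (y - (x₁+x₂)/2) - 1),
        (Real.exp_pos (x₁ - y)).le, mul_nonneg hκ (by linarith : (0:ℝ) ≤ y - (x₁+x₂)/2)]
  · have ht : theta (x₁ - x₂) = 0 := if_neg (by intro h; simp at h; linarith)
    have hac : min ((x₁+x₂)/2) x₁ = x₁ := min_eq_right (by linarith)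
    have hbc : max ((x₁+x₂)/2) x₂ = x₂ := max_eq_right (by linarith)
    rw [ht, hac, hbc, mul_zero, add_zero]
    have hlog : 0 ≤ (κ+2) * Real.log (κ+2) :=
      mul_nonneg (by linarith) (Real.log_nonneg hL)
    rcases le_total y x₁ with hy | hy
    · rw [max_eq_left (by linarith), max_eq_right (by linarith)]
      have e4 := aux_KL hL (x₁ - y)
      nlinarith [(Real.exp_pos (y - x₂)).le]
    · rw [max_eq_right (by linarith)]
      rcases le_total y x₂ with hy2 | hy2
      · rw [max_eq_right (by linarith)]
        nlinarith [(Real.exp_pos (y - x₂)).le, (Real.exp_pos (x₁ - y)).le,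
          mul_nonneg hκ (by linarith : (0:ℝ) ≤ y - x₁)]
      · rw [max_eq_left (by linarith)]
        have e4 := aux_KL hL (y - x₂)
        nlinarith [(Real.exp_pos (x₁ - y)).le,
          mul_nonneg hκ (by linarith : (0:ℝ) ≤ y - x₁),
          mul_nonneg hκ (by linarith : (0:ℝ) ≤ y - x₂)]
lemma aux_env (m : ℕ) (a b y : ℝ) :
    |y| ^ m * Real.exp (-(2 * (max (a - y) 0 + max (y - b) 0)))
      ≤ 2 ^ m * ((max |a| |b|) ^ m + m.factorial)
        * Real.exp (-(max (a - y) 0 + max (y - b) 0)) := by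
  set d := max (a - y) 0 + max (y - b) 0 with hd_def
  have hd : 0 ≤ d := add_nonneg (le_max_right _ _) (le_max_right _ _)
  set R := max |a| |b| with hR_def
  have hR : 0 ≤ R := le_trans (abs_nonneg a) (le_max_left _ _)
  have hyR : |y| ≤ R + d := by
    rw [abs_le]
    constructor
    · have h1 : a - y ≤ max (a - y) 0 := le_max_left _ _
      have h2 : (0:ℝ) ≤ max (y - b) 0 := le_max_right _ _
      have h3 : -|a| ≤ a := neg_abs_le a
      have h4 : |a| ≤ R := le_max_left _ _
      simp only [hd_def]; linarith
    · have h1 : y - b ≤ max (y - b) 0 := le_max_left _ _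
      have h2 : (0:ℝ) ≤ max (a - y) 0 := le_max_right _ _
      have h3 : b ≤ |b| := le_abs_self b
      have h4 : |b| ≤ R := le_max_right _ _
      simp only [hd_def]; linarith
  have step2 : |y| ^ m ≤ (R + d) ^ m := pow_le_pow_left₀ (abs_nonneg y) hyR m
  have step3 : (R + d) ^ m ≤ 2 ^ m * (R ^ m + d ^ m) := by
    have h1 : R + d ≤ 2 * max R d := by
      rcases le_total R d with h | h
      · rw [max_eq_right h]; linarith
      · rw [max_eq_left h]; linarith
    calc (R + d) ^ m ≤ (2 * max R d) ^ m :=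
          pow_le_pow_left₀ (by linarith) h1 m
      _ = 2 ^ m * (max R d) ^ m := mul_pow 2 _ m
      _ ≤ 2 ^ m * (R ^ m + d ^ m) := by
          gcongr 2 ^ m * ?_ -- ?
          rcases le_total R d with h | h
          · rw [max_eq_right h]; nlinarith [pow_nonneg hR m]
          · rw [max_eq_left h]; nlinarith [pow_nonneg hd m]
  have step4 : d ^ m * Real.exp (-(2 * d)) ≤ m.factorial * Real.exp (-d) := by
    have h1 : d ^ m ≤ m.factorial * Real.exp d := by
      have := Real.pow_div_factorial_le_exp d hd m
      have hf : (0:ℝ) < m.factorial := by positivity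
      rw [div_le_iff₀ hf] at this
      linarith
    calc d ^ m * Real.exp (-(2 * d)) ≤ (m.factorial * Real.exp d) * Real.exp (-(2*d)) :=
          mul_le_mul_of_nonneg_right h1 (Real.exp_pos _).le
      _ = m.factorial * (Real.exp d * Real.exp (-(2*d))) := by ring
      _ = m.factorial * Real.exp (-d) := by
          rw [← Real.exp_add]; ring_nf
  have hexp2 : Real.exp (-(2 * d)) ≤ Real.exp (-d) := Real.exp_le_exp.2 (by linarith)
  calc |y| ^ m * Real.exp (-(2 * d))
      ≤ (2 ^ m * (R ^ m + d ^ m)) * Real.exp (-(2 * d)) :=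
        mul_le_mul_of_nonneg_right (step2.trans step3) (Real.exp_pos _).le
    _ = 2 ^ m * (R ^ m * Real.exp (-(2*d)) + d ^ m * Real.exp (-(2*d))) := by ring
    _ ≤ 2 ^ m * (R ^ m * Real.exp (-d) + m.factorial * Real.exp (-d)) := by
        have h2 : R ^ m * Real.exp (-(2*d)) ≤ R ^ m * Real.exp (-d) :=
          mul_le_mul_of_nonneg_left hexp2 (pow_nonneg hR m)
        have h3 : (0:ℝ) < 2 ^ m := by positivity
        nlinarith [step4]
    _ = 2 ^ m * (R ^ m + m.factorial) * Real.exp (-d) := by ring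
lemma aux_G {a b : ℝ} (hab : a ≤ b) :
    Integrable (fun y : ℝ => Real.exp (-(max (a - y) 0 + max (y - b) 0))) ∧
    (∫ y : ℝ, Real.exp (-(max (a - y) 0 + max (y - b) 0))) ≤ (b - a) + 2 := by
  set G : ℝ → ℝ := fun y => Real.exp (-(max (a - y) 0 + max (y - b) 0)) with hG
  have heq1 : EqOn (fun y : ℝ => Real.exp y * Real.exp (-a)) G (Iic a) := by
    intro y hy
    simp only [mem_Iic] at hy
    simp only [hG, max_eq_left (by linarith : (0:ℝ) ≤ a - y),
      max_eq_right (by linarith : y - b ≤ (0:ℝ)), ← Real.exp_add]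
    congr 1; ring
  have heq3 : EqOn (fun y : ℝ => Real.exp (-y) * Real.exp b) G (Ioi b) := by
    intro y hy
    simp only [mem_Ioi] at hy
    simp only [hG, max_eq_right (by linarith : a - y ≤ (0:ℝ)),
      max_eq_left (by linarith : (0:ℝ) ≤ y - b), ← Real.exp_add]
    congr 1; ring
  have h1 : IntegrableOn G (Iic a) :=
    IntegrableOn.congr_fun ((integrableOn_exp_Iic a).mul_const (Real.exp (-a))) heq1
      measurableSet_Iic
  have hGc : Continuous G := by
    apply Real.continuous_exp.comp
    exact (((continuous_const.sub continuous_id).max continuous_const).add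
      ((continuous_id.sub continuous_const).max continuous_const)).neg
  have h2 : IntegrableOn G (Ioc a b) := hGc.integrableOn_Ioc
  have h3 : IntegrableOn G (Ioi b) := by
    have h0 := (exp_neg_integrableOn_Ioi b (one_pos)).mul_const (Real.exp b)
    refine IntegrableOn.congr_fun h0 ?_ measurableSet_Ioi
    intro y hy
    simpa using heq3 hy
  have hIicb : IntegrableOn G (Iic b) := by
    rw [← Iic_union_Ioc_eq_Iic hab]; exact h1.union h2
  have hint : Integrable G := by
    rw [← integrableOn_univ, ← Iic_union_Ioi (a := b)]
    exact hIicb.union h3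
  refine ⟨hint, ?_⟩
  have hv1 : ∫ y in Iic a, G y = 1 := by
    rw [← setIntegral_congr_fun measurableSet_Iic heq1, integral_mul_const _ _,
      integral_exp_Iic, ← Real.exp_add]
    simp
  have hv3 : ∫ y in Ioi b, G y = 1 := by
    rw [← setIntegral_congr_fun measurableSet_Ioi heq3, integral_mul_const _ _,
      integral_exp_neg_Ioi, ← Real.exp_add]
    simp
  have hv2 : ∫ y in Ioc a b, G y ≤ b - a := by
    have hle : ∀ y ∈ Ioc a b, G y ≤ 1 := by
      intro y _
      simp only [hG]
      rw [Real.exp_le_one_iff]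
      have := le_max_right (a - y) (0:ℝ)
      have := le_max_right (y - b) (0:ℝ)
      linarith [le_max_right (a - y) (0:ℝ), le_max_right (y - b) (0:ℝ)]
    calc ∫ y in Ioc a b, G y ≤ ∫ _ in Ioc a b, (1:ℝ) :=
          setIntegral_mono_on h2 (integrableOn_const measure_Ioc_lt_top.ne)
            measurableSet_Ioc hle
      _ = b - a := by
          rw [setIntegral_const, measureReal_def, Real.volume_Ioc, smul_eq_mul, mul_one,
            ENNReal.toReal_ofReal (by linarith)]
  have hsplit : ∫ y, G y = (∫ y in Iic a, G y) + (∫ y in Ioc a b, G y) + ∫ y in Ioi b, G y := by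
    rw [← setIntegral_univ, ← Iic_union_Ioi (a := b),
      setIntegral_union (Iic_disjoint_Ioi le_rfl) measurableSet_Ioi hIicb h3,
      ← Iic_union_Ioc_eq_Iic hab,
      setIntegral_union (Iic_disjoint_Ioc le_rfl) measurableSet_Ioc h1 h2]
  rw [hsplit, hv1, hv3]
  linarith

theorem stmt1 (m : ℕ) (κ : ℝ) (hκ : 0 ≤ κ) :
    ∃ P : MvPolynomial (Fin 2) ℝ, (∀ d, 0 ≤ P.coeff d) ∧
      ∀ x₁ x₂ : ℝ,
        Integrable (fun y : ℝ =>
          |y| ^ m * Real.exp (κ * (x₁ - y) - Real.exp (x₁ - y) - Real.exp (y - x₂))) ∧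
        (∫ y : ℝ, |y| ^ m * Real.exp (κ * (x₁ - y) - Real.exp (x₁ - y) - Real.exp (y - x₂)))
          ≤ MvPolynomial.eval ![|x₁|, |x₂|] P *
            Real.exp ((κ * (x₁ - x₂) / 2 - Real.exp ((x₁ - x₂) / 2)) * theta (x₁ - x₂)) := by
  set A : ℝ := (κ+2) * Real.log (κ+2) + 1 with hA_def
  set K : ℝ := 4 * 2^m * (1 + m.factorial) * Real.exp A with hK_def
  have hK0 : (0:ℝ) ≤ K := by positivity
  refine ⟨MvPolynomial.C K * (1 + MvPolynomial.X 0 + MvPolynomial.X 1) ^ (m+1),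
    aux_coeff_P K hK0 (m+1), ?_⟩
  intro x₁ x₂
  set a : ℝ := min ((x₁+x₂)/2) x₁ with ha_def
  set b : ℝ := max ((x₁+x₂)/2) x₂ with hb_def
  have hab : a ≤ b := le_trans (min_le_left _ _) (le_max_left _ _)
  set E₀ : ℝ := (κ * (x₁ - x₂) / 2 - Real.exp ((x₁ - x₂) / 2)) * theta (x₁ - x₂) with hE_def
  obtain ⟨hGint, hGval⟩ := aux_G hab
  set R : ℝ := max |a| |b| with hR_def
  have hR0 : (0:ℝ) ≤ R := le_trans (abs_nonneg a) (le_max_left _ _)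
  set C₀ : ℝ := 2^m * (R^m + m.factorial) * Real.exp (A + E₀) with hC_def
  have hC0 : (0:ℝ) ≤ C₀ := by positivity
  set f : ℝ → ℝ := fun y =>
    |y| ^ m * Real.exp (κ * (x₁ - y) - Real.exp (x₁ - y) - Real.exp (y - x₂)) with hf_def
  set G : ℝ → ℝ := fun y => Real.exp (-(max (a - y) 0 + max (y - b) 0)) with hG_def
  have hfG : ∀ y, f y ≤ C₀ * G y := by
    intro y
    have hkey := aux_point hκ x₁ x₂ y
    have h1 : Real.exp (κ * (x₁ - y) - Real.exp (x₁ - y) - Real.exp (y - x₂))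
        ≤ Real.exp (A + E₀) * Real.exp (-(2 * (max (a - y) 0 + max (y - b) 0))) := by
      rw [← Real.exp_add]
      apply Real.exp_le_exp.2
      rw [ha_def, hb_def]
      linarith [hkey]
    calc f y ≤ |y| ^ m * (Real.exp (A + E₀)
          * Real.exp (-(2 * (max (a - y) 0 + max (y - b) 0)))) :=
          mul_le_mul_of_nonneg_left h1 (pow_nonneg (abs_nonneg y) m)
      _ = Real.exp (A + E₀)
          * (|y| ^ m * Real.exp (-(2 * (max (a - y) 0 + max (y - b) 0)))) := by ring
      _ ≤ Real.exp (A + E₀)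
          * (2 ^ m * (R ^ m + m.factorial) * Real.exp (-(max (a - y) 0 + max (y - b) 0))) :=
          mul_le_mul_of_nonneg_left (aux_env m a b y) (Real.exp_pos _).le
      _ = C₀ * G y := by simp only [hC_def, hG_def]; ring
  have hfc : Continuous f := by
    apply ((continuous_abs.pow m).mul _)
    apply Real.continuous_exp.comp
    fun_prop
  have hintf : Integrable f := by
    refine Integrable.mono' (hGint.const_mul C₀) hfc.aestronglyMeasurable ?_
    filter_upwards with y
    rw [Real.norm_of_nonneg (by positivity)]
    exact hfG y
  refine ⟨hintf, ?_⟩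
  have hIle : (∫ y, f y) ≤ C₀ * ((b - a) + 2) := by
    calc (∫ y, f y) ≤ ∫ y, C₀ * G y := integral_mono hintf (hGint.const_mul C₀) hfG
      _ = C₀ * ∫ y, G y := integral_const_mul C₀ G
      _ ≤ C₀ * ((b - a) + 2) := mul_le_mul_of_nonneg_left hGval hC0
  set S : ℝ := 1 + |x₁| + |x₂| with hS_def
  have hS1 : (1:ℝ) ≤ S := by
    simp only [hS_def]; linarith [abs_nonneg x₁, abs_nonneg x₂]
  have hRS : R ≤ S := by
    have hc1 : -S ≤ (x₁+x₂)/2 := by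
      simp only [hS_def]; linarith [neg_abs_le x₁, neg_abs_le x₂]
    have hc2 : (x₁+x₂)/2 ≤ S := by
      simp only [hS_def]; linarith [le_abs_self x₁, le_abs_self x₂]
    have hx1a : -S ≤ x₁ := by simp only [hS_def]; linarith [neg_abs_le x₁, abs_nonneg x₂]
    have hx1b : x₁ ≤ S := by simp only [hS_def]; linarith [le_abs_self x₁, abs_nonneg x₂]
    have hx2a : -S ≤ x₂ := by simp only [hS_def]; linarith [neg_abs_le x₂, abs_nonneg x₁]
    have hx2b : x₂ ≤ S := by simp only [hS_def]; linarith [le_abs_self x₂, abs_nonneg x₁]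
    have h1 : -S ≤ a := le_min hc1 hx1a
    have h2 : a ≤ S := (min_le_right _ _).trans hx1b
    have h3 : -S ≤ b := hc1.trans (le_max_left _ _)
    have h4 : b ≤ S := max_le hc2 hx2b
    exact max_le (abs_le.2 ⟨h1, h2⟩) (abs_le.2 ⟨h3, h4⟩)
  have hba : (b - a) + 2 ≤ 4 * S := by
    have h1 : -S ≤ a := (abs_le.1 ((le_max_left _ _).trans hRS)).1
    have h2 : b ≤ S := (abs_le.1 ((le_max_right _ _).trans hRS)).2
    linarith
  have hSm : R ^ m + (m.factorial : ℝ) ≤ (1 + m.factorial) * S ^ m := by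
    have h1 : R ^ m ≤ S ^ m := pow_le_pow_left₀ hR0 hRS m
    have h2 : (1:ℝ) ≤ S ^ m := one_le_pow₀ hS1
    nlinarith [Nat.cast_nonneg (α := ℝ) m.factorial]
  have hfinal : C₀ * ((b - a) + 2) ≤ K * S ^ (m+1) * Real.exp E₀ := by
    have h1 : C₀ ≤ 2 ^ m * ((1 + m.factorial) * S ^ m) * Real.exp (A + E₀) := by
      apply mul_le_mul_of_nonneg_right _ (Real.exp_pos _).le
      apply mul_le_mul_of_nonneg_left hSm (by positivity)
    have h2 : C₀ * ((b - a) + 2) ≤ (2 ^ m * ((1 + m.factorial) * S ^ m) * Real.exp (A + E₀)) * (4 * S) := by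
      apply mul_le_mul h1 hba (by linarith [hS1]) (by positivity)
    calc C₀ * ((b - a) + 2) ≤ _ := h2
      _ = K * S ^ (m+1) * Real.exp E₀ := by
        simp only [hK_def]
        rw [Real.exp_add, pow_succ]
        ring
  have heval : MvPolynomial.eval ![|x₁|, |x₂|]
      (MvPolynomial.C K * (1 + MvPolynomial.X 0 + MvPolynomial.X 1) ^ (m+1)) = K * S ^ (m+1) := by
    simp [hS_def]
  rw [heval]
  calc (∫ y, f y) ≤ C₀ * ((b - a) + 2) := hIle
    _ ≤ K * S ^ (m+1) * Real.exp E₀ := hfinal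
end

section
/- For every m ∈ ℕ, g > 0, κ ≥ 0 and x ∈ ℝ, the integral ∫₀^∞ y^m (1 + e^{-y})^{-g} (1 - e^{-y})^{g-1} exp(κ(y+x) - e^{y+x}) dy is finite and bounded by P(|x|) · exp([κx - e^x] · θ(x)), where P is a polynomial in |x| depending on m, g, κ, and θ is the Heaviside step function. -/
open MeasureTheory

lemma aux_exp_bound (κ : ℝ) (hκ : 0 ≤ κ) (t : ℝ) :
    Real.exp (κ * t - Real.exp t) ≤ Real.exp ((κ+1)^2) * Real.exp (-t) := by
  rw [← Real.exp_add, Real.exp_le_exp]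
  have h2 := Real.add_one_le_exp (t/2)
  have h3 : Real.exp (t/2) * Real.exp (t/2) = Real.exp t := by
    rw [← Real.exp_add]; ring_nf
  have h4 := Real.exp_pos t
  rcases le_total t 0 with ht | ht
  · nlinarith [sq_nonneg (κ+1)]
  · have hsq : (t/2 + 1)^2 ≤ Real.exp t := by nlinarith [Real.exp_pos (t/2)]
    nlinarith [sq_nonneg (κ + 1 - t/2)]

lemma aux_A_bound (g : ℝ) (hg : 0 < g) {y : ℝ} (hy : 0 < y) :
    (1 + Real.exp (-y)) ^ (-g) * (1 - Real.exp (-y)) ^ (g - 1)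
      ≤ Real.exp 1 * (y ^ (g-1) + 1) := by
  have hey : Real.exp (-y) < 1 := Real.exp_lt_one_iff.mpr (by linarith)
  have hb : (0:ℝ) < 1 - Real.exp (-y) := by linarith
  have h1 : (1 + Real.exp (-y)) ^ (-g) ≤ 1 :=
    Real.rpow_le_one_of_one_le_of_nonpos (by nlinarith [Real.exp_pos (-y)]) (by linarith)
  have h2 : (0:ℝ) ≤ (1 - Real.exp (-y)) ^ (g - 1) := Real.rpow_nonneg hb.le _
  have h2e : (2:ℝ) ≤ Real.exp 1 := by nlinarith [Real.add_one_le_exp 1]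
  have key : (1 - Real.exp (-y)) ^ (g - 1) ≤ Real.exp 1 * (y ^ (g-1) + 1) := by
    rcases le_total 1 g with hg1 | hg1
    · have hle1 : (1 - Real.exp (-y)) ^ (g - 1) ≤ 1 :=
        Real.rpow_le_one hb.le (by nlinarith [Real.exp_pos (-y)]) (by linarith)
      have hy1 : (0:ℝ) ≤ y ^ (g-1) := Real.rpow_nonneg hy.le _
      nlinarith
    · rcases le_total y 1 with hy1 | hy1
      · have hlow : y * Real.exp (-1) ≤ 1 - Real.exp (-y) := by
          have h6 : y * Real.exp (-y) ≤ 1 - Real.exp (-y) := by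
            have h5 := Real.add_one_le_exp y
            have h7 := Real.exp_pos (-y)
            have h8 : Real.exp y * Real.exp (-y) = 1 := by
              rw [← Real.exp_add]; simp
            nlinarith
          have h9 : Real.exp (-1) ≤ Real.exp (-y) := Real.exp_le_exp.mpr (by linarith)
          nlinarith
        have hpos : (0:ℝ) < y * Real.exp (-1) := by positivity
        have hmono := Real.rpow_le_rpow_of_nonpos hpos hlow (by linarith : g - 1 ≤ 0)
        refine hmono.trans ?_
        rw [Real.mul_rpow hy.le (Real.exp_pos _).le]
        have hre : (Real.exp (-1)) ^ (g-1) = Real.exp (-(g-1)) := by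
          rw [← Real.exp_mul]; ring_nf
        rw [hre]
        have hee : Real.exp (-(g-1)) ≤ Real.exp 1 := Real.exp_le_exp.mpr (by linarith)
        have hyg : (0:ℝ) ≤ y ^ (g-1) := Real.rpow_nonneg hy.le _
        nlinarith [Real.exp_pos 1]
      · have h12 : (1:ℝ)/2 ≤ 1 - Real.exp (-y) := by
          have hmo : Real.exp (-y) ≤ Real.exp (-1) := Real.exp_le_exp.mpr (by linarith)
          have hprod : Real.exp (-1) * Real.exp 1 = 1 := by rw [← Real.exp_add]; simp
          nlinarith [Real.exp_pos (-1)]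
        have hmono := Real.rpow_le_rpow_of_nonpos (by norm_num : (0:ℝ) < 1/2) h12
          (by linarith : g - 1 ≤ 0)
        refine hmono.trans ?_
        have hhalf : ((1:ℝ)/2) ^ (g-1) = 2 ^ (1 - g) := by
          rw [one_div, ← Real.rpow_neg_one, ← Real.rpow_mul (by norm_num)]
          ring_nf
        rw [hhalf]
        have h21 : (2:ℝ) ^ (1-g) ≤ 2 ^ (1:ℝ) :=
          Real.rpow_le_rpow_of_exponent_le (by norm_num) (by linarith)
        have hyg : (0:ℝ) ≤ y ^ (g-1) := Real.rpow_nonneg hy.le _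
        rw [Real.rpow_one] at h21
        nlinarith
  calc (1 + Real.exp (-y)) ^ (-g) * (1 - Real.exp (-y)) ^ (g - 1)
      ≤ 1 * (1 - Real.exp (-y)) ^ (g - 1) := mul_le_mul_of_nonneg_right h1 h2
    _ = (1 - Real.exp (-y)) ^ (g - 1) := one_mul _
    _ ≤ _ := key

lemma aux_poly_bound (m : ℕ) (g : ℝ) (hg : 0 < g) {y : ℝ} (hy : 0 < y) :
    y ^ m * (y ^ (g-1) + 1) ≤ y ^ (g-1) + 2 + 2 * y ^ (m + Nat.ceil g) := by
  set k := m + Nat.ceil g with hk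
  have hyg : (0:ℝ) ≤ y ^ (g-1) := Real.rpow_nonneg hy.le _
  have hyk : (0:ℝ) ≤ y ^ k := pow_nonneg hy.le _
  rcases le_total y 1 with hy1 | hy1
  · have hm : y ^ m ≤ 1 := pow_le_one₀ hy.le hy1
    have hmn : (0:ℝ) ≤ y ^ m := pow_nonneg hy.le _
    nlinarith
  · have h1 : y ^ m * y ^ (g-1) ≤ y ^ k := by
      have : y ^ m * y ^ (g-1) = y ^ ((m:ℝ) + (g-1)) := by
        rw [Real.rpow_add hy, Real.rpow_natCast]
      rw [this]
      have hle : (m:ℝ) + (g-1) ≤ (k:ℝ) := by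
        have := Nat.le_ceil g
        push_cast [hk]
        linarith
      calc y ^ ((m:ℝ)+(g-1)) ≤ y ^ ((k:ℝ)) :=
              Real.rpow_le_rpow_of_exponent_le hy1 hle
        _ = y ^ k := Real.rpow_natCast y k
    have h2 : y ^ m ≤ y ^ k := pow_le_pow_right₀ hy1 (Nat.le_add_right m _)
    nlinarith

lemma aux_gamma_integrable (g : ℝ) (hg : 0 < g) (k : ℕ) :
    IntegrableOn (fun y : ℝ => (y ^ (g-1) + 2 + 2 * y ^ k) * Real.exp (-y))
      (Set.Ioi (0:ℝ)) := by
  have hA : IntegrableOn (fun y : ℝ => y ^ (g-1) * Real.exp (-y)) (Set.Ioi (0:ℝ)) := by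
    have := Real.GammaIntegral_convergent hg
    exact this.congr_fun (fun y _ => by ring) measurableSet_Ioi
  have hB : IntegrableOn (fun y : ℝ => (2:ℝ) * Real.exp (-y)) (Set.Ioi (0:ℝ)) := by
    have := (exp_neg_integrableOn_Ioi (0:ℝ) (by norm_num : (0:ℝ) < 1))
    exact (this.congr_fun (fun y _ => by norm_num) measurableSet_Ioi).const_mul 2
  have hC : IntegrableOn (fun y : ℝ => 2 * (y ^ k * Real.exp (-y))) (Set.Ioi (0:ℝ)) := by
    have h := Real.GammaIntegral_convergent (by positivity : (0:ℝ) < (k:ℝ) + 1)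
    have h2 : IntegrableOn (fun y : ℝ => y ^ k * Real.exp (-y)) (Set.Ioi (0:ℝ)) := by
      refine h.congr_fun (fun y hy => ?_) measurableSet_Ioi
      have : y ^ ((k:ℝ) + 1 - 1) = y ^ k := by
        rw [show (k:ℝ) + 1 - 1 = (k:ℝ) by ring, Real.rpow_natCast]
      dsimp only; rw [this]; ring
    exact h2.const_mul 2
  have hsum : IntegrableOn
      (fun y : ℝ => y ^ (g-1) * Real.exp (-y) + 2 * Real.exp (-y) + 2 * (y ^ k * Real.exp (-y)))
      (Set.Ioi (0:ℝ)) := (hA.add hB).add hC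
  exact hsum.congr_fun (fun y _ => by ring) measurableSet_Ioi

section MainAux
variable {m : ℕ} {g κ : ℝ}

-- pointwise master bound
lemma aux_master (hg : 0 < g) (x : ℝ) {y : ℝ} (hy : 0 < y) :
    y ^ m * (1 + Real.exp (-y)) ^ (-g) * (1 - Real.exp (-y)) ^ (g - 1) *
        Real.exp (κ * (y + x) - Real.exp (y + x))
      ≤ Real.exp 1 * (y ^ (g-1) + 2 + 2 * y ^ (m + Nat.ceil g)) *
        Real.exp (κ * (y + x) - Real.exp (y + x)) := by
  have hE : (0:ℝ) ≤ Real.exp (κ * (y + x) - Real.exp (y + x)) := (Real.exp_pos _).le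
  refine mul_le_mul_of_nonneg_right ?_ hE
  have h1 := aux_A_bound g hg hy
  have hm : (0:ℝ) ≤ y ^ m := pow_nonneg hy.le _
  calc y ^ m * (1 + Real.exp (-y)) ^ (-g) * (1 - Real.exp (-y)) ^ (g - 1)
      = y ^ m * ((1 + Real.exp (-y)) ^ (-g) * (1 - Real.exp (-y)) ^ (g - 1)) := by ring
    _ ≤ y ^ m * (Real.exp 1 * (y ^ (g-1) + 1)) := mul_le_mul_of_nonneg_left h1 hm
    _ = Real.exp 1 * (y ^ m * (y ^ (g-1) + 1)) := by ring
    _ ≤ Real.exp 1 * (y ^ (g-1) + 2 + 2 * y ^ (m + Nat.ceil g)) :=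
        mul_le_mul_of_nonneg_left (aux_poly_bound m g hg hy) (Real.exp_pos 1).le

lemma aux_f_nonneg (x : ℝ) {y : ℝ} (hy : 0 < y) :
    0 ≤ y ^ m * (1 + Real.exp (-y)) ^ (-g) * (1 - Real.exp (-y)) ^ (g - 1) *
        Real.exp (κ * (y + x) - Real.exp (y + x)) := by
  have hey : Real.exp (-y) < 1 := Real.exp_lt_one_iff.mpr (by linarith)
  have h1 : (0:ℝ) ≤ (1 + Real.exp (-y)) ^ (-g) := Real.rpow_nonneg (by positivity) _
  have h2 : (0:ℝ) ≤ (1 - Real.exp (-y)) ^ (g - 1) := Real.rpow_nonneg (by linarith) _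
  have hm : (0:ℝ) ≤ y ^ m := pow_nonneg hy.le _
  have hE : (0:ℝ) ≤ Real.exp (κ * (y + x) - Real.exp (y + x)) := (Real.exp_pos _).le
  positivity

lemma aux_poly_nonneg (g : ℝ) (k : ℕ) {y : ℝ} (hy : 0 < y) :
    (0:ℝ) ≤ y ^ (g-1) + 2 + 2 * y ^ k := by
  have := Real.rpow_nonneg hy.le (g-1)
  have := pow_nonneg hy.le k
  linarith

-- integrability of the main integrand
lemma aux_f_integrable (hg : 0 < g) (hκ : 0 ≤ κ) (x : ℝ) :
    IntegrableOn (fun y : ℝ =>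
        y ^ m * (1 + Real.exp (-y)) ^ (-g) * (1 - Real.exp (-y)) ^ (g - 1) *
          Real.exp (κ * (y + x) - Real.exp (y + x))) (Set.Ioi (0 : ℝ)) := by
  set k := m + Nat.ceil g with hk
  have hdom : IntegrableOn (fun y : ℝ =>
      (Real.exp 1 * Real.exp ((κ+1)^2) * Real.exp (-x)) *
        ((y ^ (g-1) + 2 + 2 * y ^ k) * Real.exp (-y))) (Set.Ioi (0:ℝ)) :=
    (aux_gamma_integrable g hg k).const_mul _
  refine hdom.mono' ?_ ?_
  · exact (Measurable.aestronglyMeasurable (by fun_prop))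
  · rw [ae_restrict_iff' measurableSet_Ioi]
    refine Filter.Eventually.of_forall (fun y hy => ?_)
    rw [Set.mem_Ioi] at hy
    rw [Real.norm_eq_abs, abs_of_nonneg (aux_f_nonneg x hy)]
    refine (aux_master hg x hy).trans ?_
    have hE := aux_exp_bound κ hκ (y + x)
    have hp := aux_poly_nonneg g k hy
    calc Real.exp 1 * (y ^ (g-1) + 2 + 2 * y ^ k) * Real.exp (κ * (y + x) - Real.exp (y + x))
        ≤ Real.exp 1 * (y ^ (g-1) + 2 + 2 * y ^ k) *
            (Real.exp ((κ+1)^2) * Real.exp (-(y+x))) := by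
          refine mul_le_mul_of_nonneg_left hE (by positivity)
      _ = (Real.exp 1 * Real.exp ((κ+1)^2) * Real.exp (-x)) *
            ((y ^ (g-1) + 2 + 2 * y ^ k) * Real.exp (-y)) := by
          rw [show -(y+x) = -y + -x by ring, Real.exp_add]; ring

-- integrability of poly * exp(κ y - e^y + c)
lemma aux_polyexp_integrable (hg : 0 < g) (hκ : 0 ≤ κ) (k : ℕ) (c : ℝ) :
    IntegrableOn (fun y : ℝ =>
        (y ^ (g-1) + 2 + 2 * y ^ k) * Real.exp (κ * y - Real.exp y + c))
      (Set.Ioi (0:ℝ)) := by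
  have hdom : IntegrableOn (fun y : ℝ =>
      (Real.exp ((κ+1)^2) * Real.exp c) * ((y ^ (g-1) + 2 + 2 * y ^ k) * Real.exp (-y)))
      (Set.Ioi (0:ℝ)) := (aux_gamma_integrable g hg k).const_mul _
  refine hdom.mono' (Measurable.aestronglyMeasurable (by fun_prop)) ?_
  rw [ae_restrict_iff' measurableSet_Ioi]
  refine Filter.Eventually.of_forall (fun y hy => ?_)
  rw [Set.mem_Ioi] at hy
  have hp := aux_poly_nonneg g k hy
  rw [Real.norm_eq_abs, abs_of_nonneg (by positivity)]
  have hE : Real.exp (κ * y - Real.exp y + c) ≤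
      Real.exp ((κ+1)^2) * Real.exp (-y) * Real.exp c := by
    rw [Real.exp_add]
    exact mul_le_mul_of_nonneg_right (aux_exp_bound κ hκ y) (Real.exp_pos c).le
  calc (y ^ (g-1) + 2 + 2 * y ^ k) * Real.exp (κ * y - Real.exp y + c)
      ≤ (y ^ (g-1) + 2 + 2 * y ^ k) * (Real.exp ((κ+1)^2) * Real.exp (-y) * Real.exp c) :=
        mul_le_mul_of_nonneg_left hE hp
    _ = (Real.exp ((κ+1)^2) * Real.exp c) * ((y ^ (g-1) + 2 + 2 * y ^ k) * Real.exp (-y)) := by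
        ring

-- integrability of (u+1)^k * exp(κ u - e^u) on Ioi 0
lemma aux_psi_integrable (hg : 0 < g) (hκ : 0 ≤ κ) (k : ℕ) :
    IntegrableOn (fun u : ℝ => (u + 1) ^ k * Real.exp (κ * u - Real.exp u))
      (Set.Ioi (0:ℝ)) := by
  have hdom : IntegrableOn (fun u : ℝ =>
      ((2:ℝ)^k * Real.exp ((κ+1)^2)) * ((u ^ (g-1) + 2 + 2 * u ^ k) * Real.exp (-u)))
      (Set.Ioi (0:ℝ)) := (aux_gamma_integrable g hg k).const_mul _
  refine hdom.mono' (Measurable.aestronglyMeasurable (by fun_prop)) ?_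
  rw [ae_restrict_iff' measurableSet_Ioi]
  refine Filter.Eventually.of_forall (fun u hu => ?_)
  rw [Set.mem_Ioi] at hu
  rw [Real.norm_eq_abs, abs_of_nonneg (by positivity)]
  have h1 : (u + 1) ^ k ≤ 2^k * (u ^ (g-1) + 2 + 2 * u ^ k) := by
    have h2 : (u + 1) ^ k ≤ 2 ^ (k-1) * (u ^ k + 1 ^ k) := add_pow_le hu.le one_pos.le k
    have h3 : (2:ℝ) ^ (k-1) ≤ 2 ^ k := pow_le_pow_right₀ one_le_two (Nat.sub_le k 1)
    have h4 : (0:ℝ) ≤ u ^ k + 1 := by positivity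
    have h5 : u ^ k + 1 ≤ u ^ (g-1) + 2 + 2 * u ^ k := by
      have := Real.rpow_nonneg hu.le (g-1)
      have := pow_nonneg hu.le k
      linarith
    calc (u + 1) ^ k ≤ 2 ^ (k-1) * (u ^ k + 1) := by rw [one_pow] at h2; exact h2
      _ ≤ 2 ^ k * (u ^ k + 1) := mul_le_mul_of_nonneg_right h3 h4
      _ ≤ 2 ^ k * (u ^ (g-1) + 2 + 2 * u ^ k) :=
          mul_le_mul_of_nonneg_left h5 (by positivity)
  have hE := aux_exp_bound κ hκ u
  have hE0 : (0:ℝ) ≤ Real.exp (κ * u - Real.exp u) := (Real.exp_pos _).le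
  calc (u + 1) ^ k * Real.exp (κ * u - Real.exp u)
      ≤ (2^k * (u ^ (g-1) + 2 + 2 * u ^ k)) * Real.exp (κ * u - Real.exp u) :=
        mul_le_mul_of_nonneg_right h1 hE0
    _ ≤ (2^k * (u ^ (g-1) + 2 + 2 * u ^ k)) * (Real.exp ((κ+1)^2) * Real.exp (-u)) := by
        refine mul_le_mul_of_nonneg_left hE ?_
        have := aux_poly_nonneg g k hu
        positivity
    _ = ((2:ℝ)^k * Real.exp ((κ+1)^2)) * ((u ^ (g-1) + 2 + 2 * u ^ k) * Real.exp (-u)) := by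
        ring

lemma aux_exp_split (hκ : 0 ≤ κ) {x y : ℝ} (hx : 0 ≤ x) (hy : 0 ≤ y) :
    Real.exp (κ * (y + x) - Real.exp (y + x)) ≤
      Real.exp (κ * x - Real.exp x) * Real.exp (κ * y - Real.exp y + 1) := by
  rw [← Real.exp_add, Real.exp_le_exp]
  have h1 : Real.exp (y + x) = Real.exp y * Real.exp x := Real.exp_add y x
  have h2 : 1 ≤ Real.exp x := Real.one_le_exp hx
  have h3 : 1 ≤ Real.exp y := Real.one_le_exp hy
  nlinarith [mul_nonneg (sub_nonneg.mpr h2) (sub_nonneg.mpr h3)]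

end MainAux

set_option maxHeartbeats 1000000 in
theorem stmt3 (m : ℕ) (g κ : ℝ) (hg : 0 < g) (hκ : 0 ≤ κ) :
    ∃ P : Polynomial ℝ, ∀ x : ℝ,
      IntegrableOn (fun y : ℝ =>
          y ^ m * (1 + Real.exp (-y)) ^ (-g) * (1 - Real.exp (-y)) ^ (g - 1) *
            Real.exp (κ * (y + x) - Real.exp (y + x))) (Set.Ioi (0 : ℝ)) ∧
      (∫ y in Set.Ioi (0 : ℝ),
          y ^ m * (1 + Real.exp (-y)) ^ (-g) * (1 - Real.exp (-y)) ^ (g - 1) *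
            Real.exp (κ * (y + x) - Real.exp (y + x)))
        ≤ Polynomial.eval |x| P * Real.exp ((κ * x - Real.exp x) * theta x) := by
  set k := m + Nat.ceil g with hk
  have hgk : g - 1 ≤ (k : ℝ) := by
    have h1 := Nat.le_ceil g
    have h2 : ((Nat.ceil g : ℕ) : ℝ) ≤ (k : ℝ) := by
      exact_mod_cast Nat.le_add_left _ _
    linarith
  -- constants
  set C0 : ℝ := ∫ y in Set.Ioi (0:ℝ),
      Real.exp 1 * (y ^ (g-1) + 2 + 2 * y ^ k) * Real.exp (κ * y - Real.exp y + 1) with hC0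
  set d : ℝ := ∫ u in Set.Ioi (0:ℝ), (u + 1) ^ k * Real.exp (κ * u - Real.exp u) with hd
  have hHint : IntegrableOn (fun y : ℝ =>
      Real.exp 1 * (y ^ (g-1) + 2 + 2 * y ^ k) * Real.exp (κ * y - Real.exp y + 1))
      (Set.Ioi (0:ℝ)) :=
    by
    have base : IntegrableOn (fun y : ℝ =>
        Real.exp 1 * ((y ^ (g-1) + 2 + 2 * y ^ k) * Real.exp (κ * y - Real.exp y + 1)))
        (Set.Ioi (0:ℝ)) := (aux_polyexp_integrable hg hκ k 1).const_mul (Real.exp 1)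
    exact base.congr_fun (fun y _ => by ring) measurableSet_Ioi
  have hC0nn : 0 ≤ C0 := by
    refine setIntegral_nonneg measurableSet_Ioi (fun y hy => ?_)
    rw [Set.mem_Ioi] at hy
    have := aux_poly_nonneg g k hy
    positivity
  have hdnn : 0 ≤ d := by
    refine setIntegral_nonneg measurableSet_Ioi (fun u hu => ?_)
    rw [Set.mem_Ioi] at hu
    have h1 : (0:ℝ) < u + 1 := by linarith
    positivity
  set C : ℝ := Real.exp (1+κ) * (1/g + 4) + 5 * Real.exp 1 * d + C0 with hC
  have hCd : 0 ≤ 5 * Real.exp 1 * d := by positivity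
  have hCa : 0 ≤ Real.exp (1+κ) * (1/g + 4) := by positivity
  refine ⟨Polynomial.C C * (1 + Polynomial.X) ^ (k+1), fun x => ⟨aux_f_integrable hg hκ x, ?_⟩⟩
  have heval : Polynomial.eval |x| (Polynomial.C C * (1 + Polynomial.X) ^ (k+1))
      = C * (1 + |x|) ^ (k+1) := by simp
  rw [heval]
  have hone : (1:ℝ) ≤ (1 + |x|) ^ (k+1) := one_le_pow₀ (le_add_of_nonneg_right (abs_nonneg x))
  rcases le_or_gt 0 x with hx | hx
  · -- case x ≥ 0
    have hθ : theta x = 1 := if_pos hx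
    rw [hθ, mul_one]
    have hbound : (∫ y in Set.Ioi (0 : ℝ),
        y ^ m * (1 + Real.exp (-y)) ^ (-g) * (1 - Real.exp (-y)) ^ (g - 1) *
          Real.exp (κ * (y + x) - Real.exp (y + x)))
        ≤ ∫ y in Set.Ioi (0:ℝ), Real.exp (κ * x - Real.exp x) *
            (Real.exp 1 * (y ^ (g-1) + 2 + 2 * y ^ k) *
              Real.exp (κ * y - Real.exp y + 1)) := by
      refine setIntegral_mono_on (aux_f_integrable hg hκ x)
        (hHint.const_mul _) measurableSet_Ioi (fun y hy => ?_)
      rw [Set.mem_Ioi] at hy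
      refine (aux_master hg x hy).trans ?_
      have hp := aux_poly_nonneg g k hy
      have hsplit := aux_exp_split hκ hx hy.le
      calc Real.exp 1 * (y ^ (g-1) + 2 + 2 * y ^ k) * Real.exp (κ * (y+x) - Real.exp (y+x))
          ≤ Real.exp 1 * (y ^ (g-1) + 2 + 2 * y ^ k) *
              (Real.exp (κ * x - Real.exp x) * Real.exp (κ * y - Real.exp y + 1)) :=
            mul_le_mul_of_nonneg_left hsplit (by positivity)
        _ = Real.exp (κ * x - Real.exp x) *
              (Real.exp 1 * (y ^ (g-1) + 2 + 2 * y ^ k) *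
                Real.exp (κ * y - Real.exp y + 1)) := by ring
    rw [integral_const_mul] at hbound
    refine hbound.trans ?_
    rw [← hC0]
    have hCC0 : C0 ≤ C * (1 + |x|) ^ (k+1) := by
      have h1 : C0 ≤ C := by rw [hC]; linarith
      calc C0 ≤ C := h1
        _ = C * 1 := (mul_one C).symm
        _ ≤ C * (1 + |x|) ^ (k+1) := by
            refine mul_le_mul_of_nonneg_left hone ?_
            rw [hC]; linarith
    calc Real.exp (κ * x - Real.exp x) * C0
        ≤ Real.exp (κ * x - Real.exp x) * (C * (1 + |x|) ^ (k+1)) :=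
          mul_le_mul_of_nonneg_left hCC0 (Real.exp_pos _).le
      _ = C * (1 + |x|) ^ (k+1) * Real.exp (κ * x - Real.exp x) := by ring
  · -- case x < 0
    have hθ : theta x = 0 := if_neg (not_le.mpr hx)
    rw [hθ, mul_zero, Real.exp_zero, mul_one]
    have habs : |x| = -x := abs_of_neg hx
    set s : ℝ := 1 - x with hs
    have h0s : (0:ℝ) ≤ s := by rw [hs]; linarith
    have hs1 : (1:ℝ) ≤ s := by rw [hs]; linarith
    have hIntF := aux_f_integrable (m := m) hg hκ x
    have hint1 : IntegrableOn (fun y : ℝ =>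
        y ^ m * (1 + Real.exp (-y)) ^ (-g) * (1 - Real.exp (-y)) ^ (g - 1) *
          Real.exp (κ * (y + x) - Real.exp (y + x))) (Set.Ioc (0:ℝ) s) :=
      hIntF.mono_set Set.Ioc_subset_Ioi_self
    have hint2 : IntegrableOn (fun y : ℝ =>
        y ^ m * (1 + Real.exp (-y)) ^ (-g) * (1 - Real.exp (-y)) ^ (g - 1) *
          Real.exp (κ * (y + x) - Real.exp (y + x))) (Set.Ioi s) :=
      hIntF.mono_set (Set.Ioi_subset_Ioi h0s)
    have hsplit : (∫ y in Set.Ioi (0 : ℝ),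
        y ^ m * (1 + Real.exp (-y)) ^ (-g) * (1 - Real.exp (-y)) ^ (g - 1) *
          Real.exp (κ * (y + x) - Real.exp (y + x)))
        = (∫ y in Set.Ioc (0:ℝ) s,
            y ^ m * (1 + Real.exp (-y)) ^ (-g) * (1 - Real.exp (-y)) ^ (g - 1) *
              Real.exp (κ * (y + x) - Real.exp (y + x)))
          + ∫ y in Set.Ioi s,
              y ^ m * (1 + Real.exp (-y)) ^ (-g) * (1 - Real.exp (-y)) ^ (g - 1) *
                Real.exp (κ * (y + x) - Real.exp (y + x)) := by
      rw [← Set.Ioc_union_Ioi_eq_Ioi h0s]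
      exact setIntegral_union (Set.Ioc_disjoint_Ioi le_rfl) measurableSet_Ioi hint1 hint2
    rw [hsplit]
    -- piece 1
    have hpolyIoc : IntegrableOn (fun y : ℝ => y ^ (g-1) + 2 + 2 * y ^ k)
        (Set.Ioc (0:ℝ) s) := by
      have hA : IntegrableOn (fun y : ℝ => y ^ (g-1)) (Set.Ioc (0:ℝ) s) :=
        (intervalIntegrable_iff_integrableOn_Ioc_of_le h0s).mp
          (intervalIntegral.intervalIntegrable_rpow' (by linarith))
      have hB : IntegrableOn (fun _ : ℝ => (2:ℝ)) (Set.Ioc (0:ℝ) s) :=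
        integrableOn_const measure_Ioc_lt_top.ne
      have hCc : IntegrableOn (fun y : ℝ => 2 * y ^ k) (Set.Ioc (0:ℝ) s) :=
        (Continuous.integrableOn_Ioc (continuous_const.mul (continuous_pow k)))
      have hsum : IntegrableOn (fun y : ℝ => y ^ (g-1) + 2 + 2 * y ^ k)
          (Set.Ioc (0:ℝ) s) := (hA.add hB).add hCc
      exact hsum
    have hp1 : (∫ y in Set.Ioc (0:ℝ) s,
        y ^ m * (1 + Real.exp (-y)) ^ (-g) * (1 - Real.exp (-y)) ^ (g - 1) *
          Real.exp (κ * (y + x) - Real.exp (y + x)))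
        ≤ ∫ y in Set.Ioc (0:ℝ) s, Real.exp (1+κ) * (y ^ (g-1) + 2 + 2 * y ^ k) := by
      refine setIntegral_mono_on hint1 (hpolyIoc.const_mul _) measurableSet_Ioc
        (fun y hy => ?_)
      obtain ⟨hy0, hys⟩ := hy
      refine (aux_master hg x hy0).trans ?_
      have hp := aux_poly_nonneg g k hy0
      have hEb : Real.exp (κ * (y + x) - Real.exp (y + x)) ≤ Real.exp κ := by
        rw [Real.exp_le_exp]
        have hyx1 : y + x ≤ 1 := by rw [hs] at hys; linarith
        have : κ * (y + x) ≤ κ * 1 := mul_le_mul_of_nonneg_left hyx1 hκ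
        have := Real.exp_pos (y + x)
        linarith
      calc Real.exp 1 * (y ^ (g-1) + 2 + 2 * y ^ k) * Real.exp (κ * (y+x) - Real.exp (y+x))
          ≤ Real.exp 1 * (y ^ (g-1) + 2 + 2 * y ^ k) * Real.exp κ :=
            mul_le_mul_of_nonneg_left hEb (by positivity)
        _ = Real.exp (1+κ) * (y ^ (g-1) + 2 + 2 * y ^ k) := by
            rw [Real.exp_add]; ring
    have hval : (∫ y in Set.Ioc (0:ℝ) s, (y ^ (g-1) + 2 + 2 * y ^ k))
        = s ^ g / g + 2 * s + 2 * (s ^ (k+1) / ((k:ℝ)+1)) := by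
      rw [← intervalIntegral.integral_of_le h0s]
      have iA : IntervalIntegrable (fun y : ℝ => y ^ (g-1)) volume 0 s :=
        intervalIntegral.intervalIntegrable_rpow' (by linarith)
      have iB : IntervalIntegrable (fun _ : ℝ => (2:ℝ)) volume 0 s :=
        intervalIntegrable_const
      have iC : IntervalIntegrable (fun y : ℝ => 2 * y ^ k) volume 0 s :=
        (Continuous.intervalIntegrable (continuous_const.mul (continuous_pow k)) 0 s)
      rw [intervalIntegral.integral_add (iA.add iB) iC,
        intervalIntegral.integral_add iA iB]
      rw [integral_rpow (Or.inl (by linarith))]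
      rw [intervalIntegral.integral_const]
      rw [intervalIntegral.integral_const_mul, integral_pow]
      rw [show g - 1 + 1 = g by ring, Real.zero_rpow hg.ne']
      push_cast [smul_eq_mul]
      ring
    have hsk : s ^ g ≤ s ^ (k+1) := by
      have h1 : s ^ g ≤ s ^ (((k+1:ℕ)):ℝ) := by
        refine Real.rpow_le_rpow_of_exponent_le hs1 ?_
        push_cast
        linarith
      rwa [Real.rpow_natCast] at h1
    have hsknn : (0:ℝ) ≤ s ^ (k+1) := by positivity
    have hs_le : s ≤ s ^ (k+1) := by
      calc s = s ^ 1 := (pow_one s).symm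
        _ ≤ s ^ (k+1) := pow_le_pow_right₀ hs1 (by omega)
    have hdiv : s ^ (k+1) / ((k:ℝ)+1) ≤ s ^ (k+1) := by
      refine div_le_self hsknn ?_
      have : (0:ℝ) ≤ (k:ℝ) := Nat.cast_nonneg k
      linarith
    have hp1' : (∫ y in Set.Ioc (0:ℝ) s, Real.exp (1+κ) * (y ^ (g-1) + 2 + 2 * y ^ k))
        ≤ Real.exp (1+κ) * (1/g + 4) * s ^ (k+1) := by
      rw [integral_const_mul, hval]
      have hsgg : s ^ g / g ≤ (1/g) * s ^ (k+1) := by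
        rw [div_le_iff₀ hg]  -- s^g ≤ (1/g)*s^(k+1)*g
        calc s ^ g ≤ s ^ (k+1) := hsk
          _ = 1 / g * s ^ (k + 1) * g := by field_simp
      have : s ^ g / g + 2 * s + 2 * (s ^ (k+1) / ((k:ℝ)+1))
          ≤ (1/g + 4) * s ^ (k+1) := by nlinarith
      refine mul_le_mul_of_nonneg_left this (Real.exp_pos _).le |>.trans_eq ?_
      ring
    -- piece 2
    set ψ : ℝ → ℝ := (Set.Ioi (0:ℝ)).indicator
        (fun u => (u + 1) ^ k * Real.exp (κ * u - Real.exp u)) with hψ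
    have hψint : Integrable ψ :=
      (integrable_indicator_iff measurableSet_Ioi).mpr (aux_psi_integrable hg hκ k)
    have hψx : Integrable (fun y : ℝ => ψ (y + x)) := hψint.comp_add_right x
    have hψnn : ∀ u : ℝ, 0 ≤ ψ u := by
      intro u
      refine Set.indicator_nonneg (fun u hu => ?_) u
      rw [Set.mem_Ioi] at hu
      positivity
    set c : ℝ := 5 * Real.exp 1 * (1 + |x|) ^ k with hc
    have hcnn : 0 ≤ c := by positivity
    have hp2 : (∫ y in Set.Ioi s,
        y ^ m * (1 + Real.exp (-y)) ^ (-g) * (1 - Real.exp (-y)) ^ (g - 1) *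
          Real.exp (κ * (y + x) - Real.exp (y + x)))
        ≤ ∫ y in Set.Ioi s, c * ψ (y + x) := by
      refine setIntegral_mono_on hint2 ((hψx.const_mul c).integrableOn)
        measurableSet_Ioi (fun y hy => ?_)
      rw [Set.mem_Ioi] at hy
      have hy1 : (1:ℝ) < y := lt_of_le_of_lt (by rw [hs]; linarith) hy
      have hy0 : (0:ℝ) < y := by linarith
      have hux : (0:ℝ) < y + x := by rw [hs] at hy; linarith
      have hψval : ψ (y + x) = (y + x + 1) ^ k * Real.exp (κ * (y+x) - Real.exp (y+x)) :=
        Set.indicator_of_mem (Set.mem_Ioi.mpr hux) _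
      rw [hψval]
      refine (aux_master hg x hy0).trans ?_
      have hE0 : (0:ℝ) ≤ Real.exp (κ * (y+x) - Real.exp (y+x)) := (Real.exp_pos _).le
      have hyg : y ^ (g-1) ≤ y ^ k := by
        have h1 : y ^ (g-1) ≤ y ^ ((k:ℕ):ℝ) :=
          Real.rpow_le_rpow_of_exponent_le hy1.le hgk
        rwa [Real.rpow_natCast] at h1
      have h2k : (2:ℝ) ≤ 2 * y ^ k := by
        have : (1:ℝ) ≤ y ^ k := one_le_pow₀ hy1.le
        linarith
      have hpoly5 : y ^ (g-1) + 2 + 2 * y ^ k ≤ 5 * y ^ k := by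
        have : (1:ℝ) ≤ y ^ k := one_le_pow₀ hy1.le
        linarith
      have hykle : y ^ k ≤ (1 + |x|) ^ k * (y + x + 1) ^ k := by
        rw [← mul_pow]
        refine pow_le_pow_left₀ hy0.le ?_ k
        rw [habs]
        nlinarith [mul_pos (neg_pos.mpr hx) (show (0:ℝ) < y - (1 - x) by rw [hs] at hy; linarith)]
      calc Real.exp 1 * (y ^ (g-1) + 2 + 2 * y ^ k) * Real.exp (κ * (y+x) - Real.exp (y+x))
          ≤ Real.exp 1 * (5 * y ^ k) * Real.exp (κ * (y+x) - Real.exp (y+x)) := by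
            refine mul_le_mul_of_nonneg_right ?_ hE0
            exact mul_le_mul_of_nonneg_left hpoly5 (Real.exp_pos 1).le
        _ ≤ Real.exp 1 * (5 * ((1 + |x|) ^ k * (y + x + 1) ^ k)) *
              Real.exp (κ * (y+x) - Real.exp (y+x)) := by
            refine mul_le_mul_of_nonneg_right ?_ hE0
            refine mul_le_mul_of_nonneg_left ?_ (Real.exp_pos 1).le
            linarith
        _ = c * ((y + x + 1) ^ k * Real.exp (κ * (y+x) - Real.exp (y+x))) := by
            rw [hc]; ring
    have hp2' : (∫ y in Set.Ioi s, c * ψ (y + x)) ≤ c * d := by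
      rw [integral_const_mul]
      refine mul_le_mul_of_nonneg_left ?_ hcnn
      have h1 : (∫ y in Set.Ioi s, ψ (y + x)) ≤ ∫ y : ℝ, ψ (y + x) :=
        setIntegral_le_integral hψx (Filter.Eventually.of_forall (fun y => hψnn _))
      have h2 : (∫ y : ℝ, ψ (y + x)) = ∫ u : ℝ, ψ u := integral_add_right_eq_self ψ x
      have h3 : (∫ u : ℝ, ψ u) = d := by
        rw [hψ, integral_indicator measurableSet_Ioi, hd]
      linarith
    -- assemble
    have htot : (∫ y in Set.Ioc (0:ℝ) s,
        y ^ m * (1 + Real.exp (-y)) ^ (-g) * (1 - Real.exp (-y)) ^ (g - 1) *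
          Real.exp (κ * (y + x) - Real.exp (y + x)))
        + (∫ y in Set.Ioi s,
            y ^ m * (1 + Real.exp (-y)) ^ (-g) * (1 - Real.exp (-y)) ^ (g - 1) *
              Real.exp (κ * (y + x) - Real.exp (y + x)))
        ≤ Real.exp (1+κ) * (1/g + 4) * s ^ (k+1) + c * d := by
      have := hp1.trans hp1'
      linarith
    refine htot.trans ?_
    have hsval : s = 1 + |x| := by rw [hs, habs]; ring
    rw [hsval, hc]
    have hb1 : (0:ℝ) ≤ 1 + |x| := by positivity
    have hbk : (1 + |x|) ^ k ≤ (1 + |x|) ^ (k+1) :=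
      pow_le_pow_right₀ (le_add_of_nonneg_right (abs_nonneg x)) (by omega)
    have hbknn : (0:ℝ) ≤ (1 + |x|) ^ k := by positivity
    rw [hC]
    nlinarith [mul_le_mul_of_nonneg_left hbk (by positivity : (0:ℝ) ≤ 5 * Real.exp 1 * d),
      mul_nonneg hC0nn (le_trans zero_le_one hone)]
end

section
/- The kernel K(x,y) = A · exp(-2ivy - e^{y-x}) · (1 + βe^{-y})^{-iv - g} · (1 - βe^{-y})^{-iv + g - 1}, defined for y > ln β, satisfies the two differential equations ∂_x K(x,y) = e^{y-x} K(x,y) and ∂_y K(x,y) = (1 - e^{y-x} + (2αe^{-y} - 1 - 2iv)/(1 - β²e^{-2y})) K(x,y), where g = 1/2 + α/β. -/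
/-- The kernel of the reflection operator:
`K(x,y) = A · exp(-2ivy - e^{y-x}) · (1+βe^{-y})^{-iv-g} · (1-βe^{-y})^{-iv+g-1}`. -/
noncomputable def reflKer (α β : ℝ) (v A : ℂ) (x y : ℝ) : ℂ :=
  A * Complex.exp (-2 * Complex.I * v * (y : ℂ) - Complex.exp ((y - x : ℝ) : ℂ)) *
    ((1 + β * Real.exp (-y) : ℝ) : ℂ) ^ (-Complex.I * v - ((1 / 2 + α / β : ℝ) : ℂ)) *
    ((1 - β * Real.exp (-y) : ℝ) : ℂ) ^ (-Complex.I * v + ((1 / 2 + α / β : ℝ) : ℂ) - 1)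

theorem stmt9 (α β : ℝ) (hβ : 0 < β) (v A : ℂ) (x y : ℝ) (hy : Real.log β < y) :
    deriv (fun t => reflKer α β v A t y) x
        = Complex.exp ((y - x : ℝ) : ℂ) * reflKer α β v A x y ∧
    deriv (fun t => reflKer α β v A x t) y
        = (1 - Complex.exp ((y - x : ℝ) : ℂ) +
            ((2 * α * Real.exp (-y) : ℝ) - 1 - 2 * Complex.I * v) /
              (1 - (β : ℂ) ^ 2 * ((Real.exp (-2 * y) : ℝ) : ℂ))) * reflKer α β v A x y := by
  have hr : 0 < Real.exp (-y) := Real.exp_pos _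
  have hbr : β * Real.exp (-y) < 1 := by
    have h1 : β < Real.exp y := by
      calc β = Real.exp (Real.log β) := (Real.exp_log hβ).symm
        _ < Real.exp y := Real.exp_lt_exp.mpr hy
    rw [Real.exp_neg]
    rw [mul_inv_lt_iff₀ (Real.exp_pos y), one_mul] at *
    exact h1
  have hP : 0 < 1 + β * Real.exp (-y) := by positivity
  have hQ : 0 < 1 - β * Real.exp (-y) := by linarith
  set p : ℂ := -Complex.I * v - ((1 / 2 + α / β : ℝ) : ℂ) with hp
  set q : ℂ := -Complex.I * v + ((1 / 2 + α / β : ℝ) : ℂ) - 1 with hq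
  constructor
  · -- x derivative
    have h1 : HasDerivAt (fun t : ℝ => ((y - t : ℝ) : ℂ)) (-1 : ℂ) x := by
      have : HasDerivAt (fun t : ℝ => (y - t : ℝ)) (-1) x := by
        simpa using (hasDerivAt_id x).const_sub y
      exact_mod_cast this.ofReal_comp
    have h2 : HasDerivAt (fun t : ℝ =>
        -2 * Complex.I * v * (y : ℂ) - Complex.exp ((y - t : ℝ) : ℂ))
        (Complex.exp ((y - x : ℝ) : ℂ)) x := by
      simpa using (h1.cexp).const_sub (-2 * Complex.I * v * (y : ℂ))
    have h3 : HasDerivAt (fun t : ℝ => reflKer α β v A t y)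
        (A * (Complex.exp (-2 * Complex.I * v * (y : ℂ) - Complex.exp ((y - x : ℝ) : ℂ)) *
          Complex.exp ((y - x : ℝ) : ℂ)) *
          ((1 + β * Real.exp (-y) : ℝ) : ℂ) ^ p *
          ((1 - β * Real.exp (-y) : ℝ) : ℂ) ^ q) x := by
      exact ((h2.cexp.const_mul A).mul_const _).mul_const _
    rw [h3.deriv, reflKer]
    ring
  · -- y derivative
    have e1 : HasDerivAt (fun t : ℝ =>
        -2 * Complex.I * v * (t : ℂ) - Complex.exp ((t - x : ℝ) : ℂ))
        (-2 * Complex.I * v - Complex.exp ((y - x : ℝ) : ℂ)) y := by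
      have ha : HasDerivAt (fun t : ℝ => -2 * Complex.I * v * (t : ℂ))
          (-2 * Complex.I * v) y := by
        simpa using ((hasDerivAt_id y).ofReal_comp).const_mul (-2 * Complex.I * v)
      have hb : HasDerivAt (fun t : ℝ => Complex.exp ((t - x : ℝ) : ℂ))
          (Complex.exp ((y - x : ℝ) : ℂ)) y := by
        have : HasDerivAt (fun t : ℝ => ((t - x : ℝ) : ℂ)) (1 : ℂ) y := by
          exact_mod_cast ((hasDerivAt_id y).sub_const x).ofReal_comp
        simpa using this.cexp
      exact ha.sub hb
    have e2 : HasDerivAt (fun t : ℝ => A * Complex.exp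
        (-2 * Complex.I * v * (t : ℂ) - Complex.exp ((t - x : ℝ) : ℂ)))
        (A * (Complex.exp (-2 * Complex.I * v * (y : ℂ) - Complex.exp ((y - x : ℝ) : ℂ)) *
          (-2 * Complex.I * v - Complex.exp ((y - x : ℝ) : ℂ)))) y :=
      e1.cexp.const_mul A
    have hde : HasDerivAt (fun t : ℝ => Real.exp (-t)) (-Real.exp (-y)) y := by
      simpa [Function.comp_def] using (Real.hasDerivAt_exp (-y)).comp y (hasDerivAt_id y).neg
    have huP : HasDerivAt (fun t : ℝ => ((1 + β * Real.exp (-t) : ℝ) : ℂ))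
        (-(((β * Real.exp (-y) : ℝ)) : ℂ)) y := by
      have : HasDerivAt (fun t : ℝ => (1 + β * Real.exp (-t) : ℝ))
          (-(β * Real.exp (-y))) y := by
        simpa [mul_comm] using (hde.const_mul β).const_add 1
      simpa using this.ofReal_comp
    have huQ : HasDerivAt (fun t : ℝ => ((1 - β * Real.exp (-t) : ℝ) : ℂ))
        (((β * Real.exp (-y)) : ℝ) : ℂ) y := by
      have : HasDerivAt (fun t : ℝ => (1 - β * Real.exp (-t) : ℝ))
          (β * Real.exp (-y)) y := by
        simpa [mul_comm] using (hde.const_mul β).const_sub 1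
      exact this.ofReal_comp
    have hPm : (((1 + β * Real.exp (-y) : ℝ) : ℂ)) ∈ Complex.slitPlane :=
      Complex.ofReal_mem_slitPlane.mpr hP
    have hQm : (((1 - β * Real.exp (-y) : ℝ) : ℂ)) ∈ Complex.slitPlane :=
      Complex.ofReal_mem_slitPlane.mpr hQ
    have eP : HasDerivAt (fun t : ℝ => ((1 + β * Real.exp (-t) : ℝ) : ℂ) ^ p)
        (p * ((1 + β * Real.exp (-y) : ℝ) : ℂ) ^ (p - 1) *
          (-(((β * Real.exp (-y) : ℝ)) : ℂ))) y := by
      have := ((Complex.hasStrictDerivAt_cpow_const (c := p) hPm).hasDerivAt).comp y huP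
      simpa [Function.comp_def] using this
    have eQ : HasDerivAt (fun t : ℝ => ((1 - β * Real.exp (-t) : ℝ) : ℂ) ^ q)
        (q * ((1 - β * Real.exp (-y) : ℝ) : ℂ) ^ (q - 1) *
          (((β * Real.exp (-y)) : ℝ) : ℂ)) y := by
      have := ((Complex.hasStrictDerivAt_cpow_const (c := q) hQm).hasDerivAt).comp y huQ
      simpa [Function.comp_def] using this
    have etot : HasDerivAt (fun t : ℝ => reflKer α β v A x t) _ y := (e2.mul eP).mul eQ
    have hPne : (((1 + β * Real.exp (-y) : ℝ) : ℂ)) ≠ 0 := by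
      exact_mod_cast hP.ne'
    have hQne : (((1 - β * Real.exp (-y) : ℝ) : ℂ)) ≠ 0 := by
      exact_mod_cast hQ.ne'
    have hβc : (β : ℂ) ≠ 0 := by exact_mod_cast hβ.ne'
    have hPsub : ((1 + β * Real.exp (-y) : ℝ) : ℂ) ^ (p - 1)
        = ((1 + β * Real.exp (-y) : ℝ) : ℂ) ^ p / ((1 + β * Real.exp (-y) : ℝ) : ℂ) := by
      rw [Complex.cpow_sub _ _ hPne, Complex.cpow_one]
    have hQsub : ((1 - β * Real.exp (-y) : ℝ) : ℂ) ^ (q - 1)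
        = ((1 - β * Real.exp (-y) : ℝ) : ℂ) ^ q / ((1 - β * Real.exp (-y) : ℝ) : ℂ) := by
      rw [Complex.cpow_sub _ _ hQne, Complex.cpow_one]
    have hexp2 : Real.exp (-2 * y) = Real.exp (-y) * Real.exp (-y) := by
      rw [← Real.exp_add]; ring_nf
    have hDen : (1 : ℂ) - (β : ℂ) ^ 2 * ((Real.exp (-2 * y) : ℝ) : ℂ)
        = ((1 + β * Real.exp (-y) : ℝ) : ℂ) * ((1 - β * Real.exp (-y) : ℝ) : ℂ) := by
      rw [hexp2]; push_cast; ring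
    -- the scalar identity
    have S : (-2 * Complex.I * v - Complex.exp ((y - x : ℝ) : ℂ))
          + p * (-(((β * Real.exp (-y) : ℝ)) : ℂ)) / ((1 + β * Real.exp (-y) : ℝ) : ℂ)
          + q * (((β * Real.exp (-y)) : ℝ) : ℂ) / ((1 - β * Real.exp (-y) : ℝ) : ℂ)
        = 1 - Complex.exp ((y - x : ℝ) : ℂ)
          + (((2 * α * Real.exp (-y) : ℝ) : ℂ) - 1 - 2 * Complex.I * v)
              / ((1 + β * Real.exp (-y) : ℝ) : ℂ) / ((1 - β * Real.exp (-y) : ℝ) : ℂ) := by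
      rw [hp, hq]
      push_cast at hPne hQne ⊢
      field_simp
      ring
    rw [etot.deriv, reflKer, hPsub, hQsub, hDen, div_mul_eq_div_div]
    simp only [Pi.mul_apply]
    linear_combination (A * Complex.exp (-2 * Complex.I * v * (y : ℂ) -
        Complex.exp ((y - x : ℝ) : ℂ)) *
        ((1 + β * Real.exp (-y) : ℝ) : ℂ) ^ p *
        ((1 - β * Real.exp (-y) : ℝ) : ℂ) ^ q) * S
end
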